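/- For every n ≥ 1, every i ∈ {1,...,n} and every nonnegative integer λ, the probability that a uniformly random permutation of {1,...,n} has exactly λ cycles of length i is at most 1/(λ!·i^λ). -/

import Mathlib

set_option linter.unusedSectionVars false
set_option maxHeartbeats 1000000

open Equiv Function

section MarkingLemma

variable {α : Type*} [Fintype α] [DecidableEq α]

lemma perm_mem_periodicPts (σ : Equiv.Perm α) (x : α) : x ∈ Function.periodicPts σ :=
  Function.mem_periodicPts.mpr ⟨orderOf σ, orderOf_pos σ, by
    simp [Function.IsPeriodicPt, Function.IsFixedPt, Equiv.Perm.iterate_eq_pow, pow_orderOf_eq_one]⟩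

lemma minPer_apply (σ : Equiv.Perm α) (x : α) :
    Function.minimalPeriod σ (σ x) = Function.minimalPeriod σ x :=
  Function.minimalPeriod_apply (perm_mem_periodicPts σ x)

lemma minPer_pow (σ : Equiv.Perm α) (k : ℕ) (x : α) :
    Function.minimalPeriod σ ((σ ^ k) x) = Function.minimalPeriod σ x := by
  induction k generalizing x with
  | zero => simp
  | succ k ih =>
    rw [pow_succ, Equiv.Perm.mul_apply, ih, minPer_apply]

lemma exists_marking (σ : Equiv.Perm α) (i lam : ℕ) [NeZero i]
    (hcard : Nat.card {x : α // Function.minimalPeriod σ x = i} = i * lam) :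
    ∃ m : Fin lam × Fin i → α, Function.Injective m ∧
      (∀ p, Function.minimalPeriod σ (m p) = i) ∧
      (∀ (j : Fin lam) (k : Fin i), σ (m (j, k)) = m (j, k + 1)) := by
  classical
  have hi : 1 ≤ i := Nat.one_le_iff_ne_zero.mpr (NeZero.ne i)
  letI st : Setoid {x : α // Function.minimalPeriod σ x = i} :=
    ⟨fun x y => σ.SameCycle x.1 y.1,
      ⟨fun x => Equiv.Perm.SameCycle.refl σ x.1, fun h => h.symm, fun h h' => h.trans h'⟩⟩
  haveI : Fintype (Quotient st) := Fintype.ofFinite _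
  have hmod : ∀ (x : {x : α // Function.minimalPeriod σ x = i}) (t : ℕ),
      (σ ^ (t % i)) x.1 = (σ ^ t) x.1 := by
    intro x t
    have h0 := Function.iterate_mod_minimalPeriod_eq (f := ⇑σ) (x := x.1) (n := t)
    rw [x.2] at h0
    simpa [Equiv.Perm.iterate_eq_pow] using h0
  let φ : Quotient st × Fin i → {x : α // Function.minimalPeriod σ x = i} :=
    fun p => ⟨(σ ^ (p.2 : ℕ)) p.1.out.1, by rw [minPer_pow]; exact p.1.out.2⟩
  have hφinj : Function.Injective φ := by
    rintro ⟨q, k⟩ ⟨q', k'⟩ h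
    have h' : (σ ^ (k : ℕ)) q.out.1 = (σ ^ (k' : ℕ)) q'.out.1 := congrArg Subtype.val h
    have hsc : σ.SameCycle q.out.1 q'.out.1 := by
      have h2 : σ.SameCycle ((σ ^ (k : ℕ)) q.out.1) ((σ ^ (k' : ℕ)) q'.out.1) :=
        h' ▸ Equiv.Perm.SameCycle.refl _ _
      exact (Equiv.Perm.sameCycle_pow_left.mp (Equiv.Perm.sameCycle_pow_right.mp h2))
    have hq : q = q' := by
      rw [← Quotient.out_eq q, ← Quotient.out_eq q']
      exact Quotient.sound hsc
    subst hq
    have hk : (k : ℕ) = (k' : ℕ) := by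
      have hlt : (k : ℕ) ∈ Set.Iio (Function.minimalPeriod σ q.out.1) := by
        rw [q.out.2]; exact k.2
      have hlt' : (k' : ℕ) ∈ Set.Iio (Function.minimalPeriod σ q.out.1) := by
        rw [q.out.2]; exact k'.2
      apply Function.iterate_injOn_Iio_minimalPeriod hlt hlt'
      simpa [Equiv.Perm.iterate_eq_pow] using h'
    exact Prod.ext rfl (Fin.ext hk)
  have hφsurj : Function.Surjective φ := by
    intro x
    have hsc : σ.SameCycle (⟦x⟧ : Quotient st).out.1 x.1 := Quotient.mk_out x
    obtain ⟨t, _, ht⟩ := hsc.exists_pow_eq'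
    refine ⟨(⟦x⟧, ⟨t % i, Nat.mod_lt _ (by omega)⟩), ?_⟩
    apply Subtype.ext
    show (σ ^ (t % i)) (⟦x⟧ : Quotient st).out.1 = x.1
    rw [hmod, ht]
  have hQ : Fintype.card (Quotient st) = lam := by
    have hc := Fintype.card_congr (Equiv.ofBijective φ ⟨hφinj, hφsurj⟩)
    rw [Fintype.card_prod, Fintype.card_fin] at hc
    rw [Nat.card_eq_fintype_card] at hcard
    rw [hcard] at hc
    exact Nat.eq_of_mul_eq_mul_right (by omega) (hc.trans (mul_comm i lam))
  let e : Fin lam ≃ Quotient st := (Fintype.equivFinOfCardEq hQ).symm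
  refine ⟨fun p => (σ ^ (p.2 : ℕ)) (e p.1).out.1, ?_, ?_, ?_⟩
  · intro p p' h
    have h2 := hφinj (a₁ := (e p.1, p.2)) (a₂ := (e p'.1, p'.2)) (Subtype.ext h)
    rw [Prod.mk.injEq] at h2
    exact Prod.ext (e.injective h2.1) h2.2
  · intro p
    rw [minPer_pow]; exact (e p.1).out.2
  · intro j k
    show σ ((σ ^ (k : ℕ)) (e j).out.1) = (σ ^ ((k + 1 : Fin i) : ℕ)) (e j).out.1
    have h1 : σ ((σ ^ (k : ℕ)) (e j).out.1) = (σ ^ ((k : ℕ) + 1)) (e j).out.1 := by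
      rw [pow_succ', Equiv.Perm.mul_apply]
    have h2 : ((k + 1 : Fin i) : ℕ) = ((k : ℕ) + 1) % i := by
      rw [Fin.val_add, Fin.val_one', Nat.add_mod ((k : ℕ)) 1 i, Nat.mod_eq_of_lt k.2]
    rw [h1, h2, hmod ⟨(e j).out.1, (e j).out.2⟩ ((k : ℕ) + 1)]

end MarkingLemma

section AuxDefs

noncomputable def epsL {n : ℕ} {β : Type*} [Fintype β] (L : β ↪ Fin n) :
    {x : Fin n // x ∉ Set.range ⇑L} ≃ Fin (n - Fintype.card β) := by
  classical
  refine Fintype.equivFinOfCardEq ?_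
  rw [Fintype.card_subtype_compl]
  have h1 : Fintype.card {x : Fin n // x ∈ Set.range ⇑L} = Fintype.card β :=
    (Fintype.card_congr (Equiv.ofInjective _ L.injective)).symm
  rw [Fintype.card_fin, h1]

noncomputable def recov {n i lam : ℕ} [NeZero i]
    (c : ((Fin lam × Fin i) ↪ Fin n) × Equiv.Perm (Fin (n - Fintype.card (Fin lam × Fin i)))) :
    Fin n → Fin n := fun x =>
  letI := Classical.propDecidable (x ∈ Set.range ⇑c.1)
  if h : x ∈ Set.range ⇑c.1 then c.1 (h.choose.1, h.choose.2 + 1)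
  else ((epsL c.1).symm (c.2 (epsL c.1 ⟨x, h⟩))).1

lemma recov_spec {n i lam : ℕ} [NeZero i] (σ : Equiv.Perm (Fin n))
    (L : (Fin lam × Fin i) ↪ Fin n)
    (hcomp : ∀ p : Fin lam × Fin i, σ (L p) = L (p.1, p.2 + 1))
    (hmem : ∀ x, (x ∉ Set.range ⇑L) ↔ σ x ∉ Set.range ⇑L) :
    recov (L, (epsL L).permCongr (σ.subtypePerm (fun x => (hmem x).symm))) = ⇑σ := by
  funext x
  unfold recov
  by_cases h : x ∈ Set.range ⇑L
  · rw [dif_pos h]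
    exact (hcomp h.choose).symm.trans (congrArg (⇑σ) h.choose_spec)
  · rw [dif_neg h]
    simp [Equiv.permCongr_apply, Equiv.Perm.subtypePerm_apply]

end AuxDefs

lemma card_mul_le (n i lam : ℕ) (hi : 1 ≤ i) :
    Nat.card {σ : Equiv.Perm (Fin n) //
        Nat.card {x : Fin n // Function.minimalPeriod σ x = i} = i * lam}
      * (Nat.factorial lam * i ^ lam) ≤ Nat.factorial n := by
  classical
  haveI : NeZero i := ⟨by omega⟩
  set A := {σ : Equiv.Perm (Fin n) //
      Nat.card {x : Fin n // Function.minimalPeriod ⇑σ x = i} = i * lam} with hA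
  rcases isEmpty_or_nonempty A with hE | hNE
  · rw [Nat.card_of_isEmpty]
    simp [Nat.factorial_pos, Nat.zero_le]
  -- i * lam ≤ n
  have hle : lam * i ≤ n := by
    obtain ⟨a⟩ := hNE
    have h1 : Nat.card {x : Fin n // Function.minimalPeriod ⇑a.1 x = i} ≤ n := by
      have := Nat.card_le_card_of_injective
        (fun x : {x : Fin n // Function.minimalPeriod ⇑a.1 x = i} => x.1)
        (fun x y h => Subtype.ext h)
      simpa using this
    rw [a.2] at h1; rw [mul_comm]; omega
  -- the chosen marking for each σ in A
  let msel : ∀ _ : A, Fin lam × Fin i → Fin n :=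
    fun a => Classical.choose (exists_marking a.1 i lam a.2)
  have mspec : ∀ a : A, Function.Injective (msel a) ∧
      (∀ p, Function.minimalPeriod ⇑a.1 (msel a p) = i) ∧
      (∀ (j : Fin lam) (k : Fin i), a.1 (msel a (j, k)) = msel a (j, k + 1)) :=
    fun a => Classical.choose_spec (exists_marking a.1 i lam a.2)
  -- the embedding associated to a marking and a pair (π, r)
  let B := Equiv.Perm (Fin lam) × (Fin lam → Fin i)
  let Lemb : A → B → ((Fin lam × Fin i) ↪ Fin n) := fun a b =>
    ⟨fun p => msel a (b.1 p.1, p.2 + b.2 p.1), by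
      intro p p' h
      have h2 := (mspec a).1 h
      rw [Prod.mk.injEq] at h2
      refine Prod.ext (b.1.injective h2.1) ?_
      have := h2.2
      rw [b.1.injective h2.1] at this
      exact add_right_cancel this⟩
  have hLcoe : ∀ (a : A) (b : B) (p : Fin lam × Fin i),
      ⇑(Lemb a b) p = msel a (b.1 p.1, p.2 + b.2 p.1) := fun a b p => rfl
  -- range of the embedding is exactly the set of points of minimal period i
  have hrange : ∀ (a : A) (b : B) (x : Fin n),
      x ∈ Set.range ⇑(Lemb a b) ↔ Function.minimalPeriod ⇑a.1 x = i := by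
    intro a b
    have hψ : Function.Surjective
        (fun p : Fin lam × Fin i => ((b.1 p.1, p.2 + b.2 p.1) : Fin lam × Fin i)) := by
      intro q
      exact ⟨(b.1.symm q.1, q.2 - b.2 (b.1.symm q.1)), by simp⟩
    have hr1 : Set.range ⇑(Lemb a b) = Set.range (msel a) := by
      have hcomp : ⇑(Lemb a b) =
          (msel a) ∘ (fun p : Fin lam × Fin i => ((b.1 p.1, p.2 + b.2 p.1) : Fin lam × Fin i)) :=
        rfl
      rw [hcomp, Set.range_comp, hψ.range_eq, Set.image_univ]
    have hsub : Set.range (msel a) ⊆ {x : Fin n | Function.minimalPeriod ⇑a.1 x = i} := by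
      rintro x ⟨p, rfl⟩; exact (mspec a).2.1 p
    have heq : Set.range (msel a) = {x : Fin n | Function.minimalPeriod ⇑a.1 x = i} := by
      refine Set.eq_of_subset_of_ncard_le hsub ?_ (Set.toFinite _)
      rw [← Nat.card_coe_set_eq, ← Nat.card_coe_set_eq,
        Nat.card_range_of_injective (mspec a).1]
      have h3 : Nat.card ↥{x : Fin n | Function.minimalPeriod ⇑a.1 x = i} = i * lam := a.2
      rw [h3]
      rw [mul_comm]
      simp [Nat.card_eq_fintype_card]
    intro x
    rw [hr1, heq]
    exact Iff.rfl
  have hmem : ∀ (a : A) (b : B) (x : Fin n),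
      (x ∉ Set.range ⇑(Lemb a b)) ↔ (a.1 x ∉ Set.range ⇑(Lemb a b)) := by
    intro a b x
    rw [not_iff_not, hrange a b x, hrange a b (a.1 x), minPer_apply]
  have hcomp : ∀ (a : A) (b : B) (p : Fin lam × Fin i),
      a.1 (⇑(Lemb a b) p) = ⇑(Lemb a b) (p.1, p.2 + 1) := by
    intro a b p
    rw [hLcoe, hLcoe, (mspec a).2.2]
    congr 2
    rw [add_right_comm]
  -- the injection
  let Φ : A × B →
      ((Fin lam × Fin i) ↪ Fin n) × Equiv.Perm (Fin (n - Fintype.card (Fin lam × Fin i))) :=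
    fun ab => (Lemb ab.1 ab.2,
      (epsL (Lemb ab.1 ab.2)).permCongr (ab.1.1.subtypePerm (fun x => (hmem ab.1 ab.2 x).symm)))
  have hΦrec : ∀ ab : A × B, recov (Φ ab) = ⇑ab.1.1 := by
    intro ab
    exact recov_spec ab.1.1 (Lemb ab.1 ab.2) (hcomp ab.1 ab.2) (hmem ab.1 ab.2)
  have hΦinj : Function.Injective Φ := by
    rintro ⟨a, b⟩ ⟨a', b'⟩ h
    have hσ : ⇑a.1 = ⇑a'.1 := by
      have := congrArg recov h
      rw [hΦrec ⟨a, b⟩, hΦrec ⟨a', b'⟩] at this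
      exact this
    have ha : a = a' := Subtype.ext (Equiv.coe_fn_injective hσ)
    subst ha
    have h1 : Lemb a b = Lemb a b' := congrArg Prod.fst h
    have hLf : ∀ p : Fin lam × Fin i,
        msel a (b.1 p.1, p.2 + b.2 p.1) = msel a (b'.1 p.1, p.2 + b'.2 p.1) := by
      intro p
      have := congrArg (fun E : (Fin lam × Fin i) ↪ Fin n => ⇑E p) h1
      exact this
    have hb : b = b' := by
      refine Prod.ext ?_ ?_
      · apply Equiv.ext
        intro j
        have h2 := (mspec a).1 (hLf (j, 0))
        rw [Prod.mk.injEq] at h2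
        exact h2.1
      · funext j
        have h2 := (mspec a).1 (hLf (j, 0))
        rw [Prod.mk.injEq] at h2
        have h3 := h2.2
        rw [zero_add, zero_add] at h3
        exact h3
    rw [hb]
  -- counting
  have hcardB : Nat.card B = Nat.factorial lam * i ^ lam := by
    simp [B, Nat.card_eq_fintype_card, Fintype.card_perm]
  calc Nat.card A * (Nat.factorial lam * i ^ lam)
      = Nat.card (A × B) := by rw [Nat.card_prod, hcardB]
    _ ≤ Nat.card (((Fin lam × Fin i) ↪ Fin n) ×
          Equiv.Perm (Fin (n - Fintype.card (Fin lam × Fin i)))) :=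
        Nat.card_le_card_of_injective Φ hΦinj
    _ = Nat.descFactorial n (lam * i) * Nat.factorial (n - lam * i) := by
        simp [Nat.card_eq_fintype_card, Fintype.card_embedding_eq, Fintype.card_perm]
    _ ≤ Nat.factorial n := by
        rw [mul_comm]
        exact le_of_eq (Nat.factorial_mul_descFactorial hle)

/-- For every `n ≥ 1`, `1 ≤ i ≤ n` and `λ ≥ 0`, the probability that a uniformly random
permutation of `{1,...,n}` has exactly `λ` cycles of length `i` is at most `1/(λ!·i^λ)`.
Having exactly `λ` cycles of length `i` means exactly `i·λ` points have minimal period `i`. -/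
theorem stmt9 (n i lam : ℕ) (hn : 1 ≤ n) (hi : 1 ≤ i) (hin : i ≤ n) :
    (Nat.card {σ : Equiv.Perm (Fin n) //
        Nat.card {x : Fin n // Function.minimalPeriod σ x = i} = i * lam} : ℝ)
      / (Nat.card (Equiv.Perm (Fin n)))
      ≤ 1 / (Nat.factorial lam * (i : ℝ) ^ lam) := by
  have key := card_mul_le n i lam hi
  have hperm : (Nat.card (Equiv.Perm (Fin n)) : ℝ) = (Nat.factorial n : ℝ) := by
    simp [Nat.card_eq_fintype_card, Fintype.card_perm]
  have hd1 : (0 : ℝ) < Nat.factorial n := by positivity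
  have hd2 : (0 : ℝ) < Nat.factorial lam * (i : ℝ) ^ lam := by positivity
  rw [hperm, div_le_div_iff₀ hd1 hd2, one_mul]
  calc (Nat.card {σ : Equiv.Perm (Fin n) //
        Nat.card {x : Fin n // Function.minimalPeriod σ x = i} = i * lam} : ℝ)
        * (Nat.factorial lam * (i : ℝ) ^ lam)
      = ((Nat.card {σ : Equiv.Perm (Fin n) //
          Nat.card {x : Fin n // Function.minimalPeriod σ x = i} = i * lam}
          * (Nat.factorial lam * i ^ lam) : ℕ) : ℝ) := by push_cast; ring
    _ ≤ ((Nat.factorial n : ℕ) : ℝ) := by exact_mod_cast key
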